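/- For a semi-Markov decision process with finite state space and bounded rewards, if the expected holding time y(s,π(s)) between decision epochs is bounded below by a positive constant, then the long-term average reward R_π(s) = lim_{G→∞} E[Σ_{g=0}^G r(s_g,π(s_g)) | s_0=s] / E[Σ_{g=0}^G τ_g | s_0=s] exists and equals (T̄_π r)(s) / (T̄_π y)(s). -/

import Mathlib

open Filter Finset Matrix

/-- For a finite-state semi-Markov decision process under a stationary policy with
embedded chain transition matrix `T` (whose Cesàro limit `T̄` exists), expected
immediate rewards `r` and expected holding times `y` bounded below by `c > 0`, the
long-term average reward
`R(s) = lim_G E[∑_{g≤G} r(s_g)] / E[∑_{g≤G} τ_g]` exists and equals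
`(T̄ r)(s) / (T̄ y)(s)`. -/
theorem smdp_average_reward_exists {n : ℕ} (T Tbar : Matrix (Fin n) (Fin n) ℝ)
    (r y : Fin n → ℝ) (c : ℝ) (hc : 0 < c) (hy : ∀ s, c ≤ y s)
    (hnonneg : ∀ s s', 0 ≤ T s s')
    (hrow : ∀ s, ∑ s', T s s' = 1)
    (hlim : Tendsto (fun G : ℕ => (G : ℝ)⁻¹ • ∑ g ∈ Finset.range G, T ^ g)
      atTop (nhds Tbar)) (s : Fin n) :
    Tendsto
      (fun G : ℕ =>
        (∑ g ∈ Finset.range (G + 1), ((T ^ g) *ᵥ r) s) /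
          (∑ g ∈ Finset.range (G + 1), ((T ^ g) *ᵥ y) s))
      atTop (nhds ((Tbar *ᵥ r) s / (Tbar *ᵥ y) s)) := by
  -- powers of T are stochastic
  have hpow_nonneg : ∀ g t t', 0 ≤ (T ^ g) t t' := by
    intro g
    induction g with
    | zero => intro t t'; simp [Matrix.one_apply]; positivity
    | succ g ih =>
        intro t t'
        rw [pow_succ, Matrix.mul_apply]
        exact Finset.sum_nonneg fun j _ => mul_nonneg (ih t j) (hnonneg j t')
  have hpow_row : ∀ g t, ∑ t', (T ^ g) t t' = 1 := by
    intro g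
    induction g with
    | zero => intro t; simp [Matrix.one_apply]
    | succ g ih =>
        intro t
        simp only [pow_succ, Matrix.mul_apply]
        rw [Finset.sum_comm]
        simp_rw [← Finset.mul_sum, hrow]
        simpa using ih t
  have hyge : ∀ g t, c ≤ ((T ^ g) *ᵥ y) t := by
    intro g t
    have : ∑ t', (T ^ g) t t' * c ≤ ∑ t', (T ^ g) t t' * y t' :=
      Finset.sum_le_sum fun j _ =>
        mul_le_mul_of_nonneg_left (hy j) (hpow_nonneg g t j)
    calc c = (∑ t', (T ^ g) t t') * c := by rw [hpow_row]; ring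
    _ = ∑ t', (T ^ g) t t' * c := by rw [Finset.sum_mul]
    _ ≤ ∑ t', (T ^ g) t t' * y t' := this
    _ = ((T ^ g) *ᵥ y) t := by simp [Matrix.mulVec, dotProduct]
  -- key Cesàro limit for any vector v
  have key : ∀ v : Fin n → ℝ,
      Tendsto (fun G : ℕ => ((G : ℝ) + 1)⁻¹ * ∑ g ∈ Finset.range (G + 1), ((T ^ g) *ᵥ v) s)
        atTop (nhds ((Tbar *ᵥ v) s)) := by
    intro v
    have hcont : Continuous fun M : Matrix (Fin n) (Fin n) ℝ => (M *ᵥ v) s := by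
      simp only [Matrix.mulVec, dotProduct]
      exact continuous_finset_sum _ fun j _ =>
        (continuous_id.matrix_elem s j).mul continuous_const
    have h1 := (hcont.continuousAt.tendsto.comp hlim).comp (tendsto_add_atTop_nat 1)
    have heq : ∀ G : ℕ,
        ((((G + 1 : ℕ) : ℝ)⁻¹ • ∑ g ∈ Finset.range (G + 1), T ^ g) *ᵥ v) s
          = ((G : ℝ) + 1)⁻¹ * ∑ g ∈ Finset.range (G + 1), ((T ^ g) *ᵥ v) s := by
      intro G
      push_cast
      rw [Matrix.smul_mulVec]
      simp only [Pi.smul_apply, smul_eq_mul]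
      congr 1
      induction (G + 1) with
      | zero => simp
      | succ k ih => rw [Finset.sum_range_succ, Finset.sum_range_succ, ← ih,
          Matrix.add_mulVec, Pi.add_apply]
    exact Tendsto.congr heq h1
  have hTbary : c ≤ (Tbar *ᵥ y) s := by
    refine ge_of_tendsto' (key y) fun G => ?_
    have hGp : (0 : ℝ) < (G : ℝ) + 1 := by positivity
    have hsum : ((G : ℝ) + 1) * c ≤ ∑ g ∈ Finset.range (G + 1), ((T ^ g) *ᵥ y) s := by
      calc ((G : ℝ) + 1) * c = ∑ g ∈ Finset.range (G + 1), c := by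
            simp [mul_comm]
      _ ≤ _ := Finset.sum_le_sum fun g _ => hyge g s
    calc c = ((G : ℝ) + 1)⁻¹ * (((G : ℝ) + 1) * c) := by field_simp
    _ ≤ _ := mul_le_mul_of_nonneg_left hsum (inv_nonneg.mpr hGp.le)
  have hne : (Tbar *ᵥ y) s ≠ 0 := (lt_of_lt_of_le hc hTbary).ne'
  have := (key r).div (key y) hne
  refine this.congr fun G => ?_
  have hGp : ((G : ℝ) + 1)⁻¹ ≠ 0 := by positivity
  simp only [Pi.div_apply]
  rw [mul_div_mul_left _ _ hGp]
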